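/- arXiv:2005.02785 — 3 statements merged into one kernel-verified Lean document; each statement's English description precedes it below -/
import Mathlib

section
/- Let f : ℝⁿ → ℝ be a bounded measurable function and g : ℝⁿ → ℝ a function such that for almost every x ∈ ℝⁿ, the ball average (1/vol(B(x,r))) ∫_{B(x,r)} f tends to g(x) as r → ∞. Then g is almost everywhere equal to a constant. -/
open MeasureTheory Filter Metric

private lemma avg_diff_tendsto {n : ℕ} (f : EuclideanSpace ℝ (Fin n) → ℝ)
    (hf : Measurable f) {M : ℝ} (hM : ∀ z, |f z| ≤ M)
    (x y : EuclideanSpace ℝ (Fin n)) :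
    Tendsto (fun r : ℝ => (⨍ z in ball x r, f z) - ⨍ z in ball y r, f z) atTop (nhds 0) := by
  set μ : Measure (EuclideanSpace ℝ (Fin n)) := volume with hμ
  set d := dist x y with hdd
  have hd0 : 0 ≤ d := dist_nonneg
  have hM0 : 0 ≤ M := (abs_nonneg _).trans (hM 0)
  set κ := (μ (ball (0 : EuclideanSpace ℝ (Fin n)) 1)).toReal with hκdef
  have hκpos : 0 < κ := by
    refine ENNReal.toReal_pos ?_ measure_ball_lt_top.ne
    exact (isOpen_ball.measure_pos μ ⟨0, mem_ball_self one_pos⟩).ne'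
  have hvol : ∀ (c : EuclideanSpace ℝ (Fin n)) (r : ℝ), 0 < r →
      (μ (ball c r)).toReal = r ^ n * κ := by
    intro c r hr
    rw [μ.addHaar_ball_of_pos c hr, ENNReal.toReal_mul,
      ENNReal.toReal_ofReal (pow_nonneg hr.le _), finrank_euclideanSpace_fin]
  have hint : ∀ (c : EuclideanSpace ℝ (Fin n)) (r : ℝ), IntegrableOn f (ball c r) μ := by
    intro c r
    refine Measure.integrableOn_of_bounded (M := M) measure_ball_lt_top.ne
      hf.aestronglyMeasurable (ae_of_all _ fun z => ?_)
    simpa [Real.norm_eq_abs] using hM z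
  have key : ∀ r : ℝ, 0 < r →
      |(⨍ z in ball x r, f z) - ⨍ z in ball y r, f z| ≤ 2 * M * ((1 + d / r) ^ n - 1) := by
    intro r hr
    have step : ∀ c c' : EuclideanSpace ℝ (Fin n), dist c c' = d →
        (μ (ball c r \ ball c' r)).toReal ≤ ((r + d) ^ n - r ^ n) * κ := by
      intro c c' hcc
      have hsub : ball c r ⊆ ball c' (r + d) :=
        ball_subset_ball' (by simp [hcc])
      have h1 : ball c r \ ball c' r ⊆ ball c' (r + d) \ ball c' r :=
        Set.diff_subset_diff_left hsub
      have h2 : (μ (ball c r \ ball c' r)).toReal ≤ (μ (ball c' (r + d) \ ball c' r)).toReal := by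
        refine ENNReal.toReal_mono ?_ (measure_mono h1)
        exact ((measure_mono Set.diff_subset).trans_lt measure_ball_lt_top).ne
      have hbb : ball c' r ⊆ ball c' (r + d) := ball_subset_ball (by linarith)
      have h3 : μ (ball c' (r + d) \ ball c' r) = μ (ball c' (r + d)) - μ (ball c' r) :=
        measure_diff hbb measurableSet_ball.nullMeasurableSet measure_ball_lt_top.ne
      rw [h3, ENNReal.toReal_sub_of_le (measure_mono hbb) measure_ball_lt_top.ne,
        hvol c' (r + d) (by linarith), hvol c' r hr] at h2
      calc (μ (ball c r \ ball c' r)).toReal ≤ (r + d) ^ n * κ - r ^ n * κ := h2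
        _ = ((r + d) ^ n - r ^ n) * κ := by ring
    have hIdiff : ∀ c c' : EuclideanSpace ℝ (Fin n), dist c c' = d →
        |∫ z in ball c r \ ball c' r, f z ∂μ| ≤ M * (((r + d) ^ n - r ^ n) * κ) := by
      intro c c' hcc
      have h1 : ‖∫ z in ball c r \ ball c' r, f z ∂μ‖ ≤ M * (μ (ball c r \ ball c' r)).toReal := by
        refine norm_setIntegral_le_of_norm_le_const
          (((measure_mono Set.diff_subset).trans_lt measure_ball_lt_top))
          (fun z _ => ?_)
        simpa [Real.norm_eq_abs] using hM z
      rw [Real.norm_eq_abs] at h1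
      exact h1.trans (mul_le_mul_of_nonneg_left (step c c' hcc) hM0)
    have hsplit : (∫ z in ball x r, f z ∂μ) - ∫ z in ball y r, f z ∂μ
        = (∫ z in ball x r \ ball y r, f z ∂μ) - ∫ z in ball y r \ ball x r, f z ∂μ := by
      have h1 := integral_inter_add_diff (μ := μ) (f := f) (s := ball x r) (t := ball y r)
        measurableSet_ball (hint x r)
      have h2 := integral_inter_add_diff (μ := μ) (f := f) (s := ball y r) (t := ball x r)
        measurableSet_ball (hint y r)
      rw [Set.inter_comm] at h2
      linarith
    have havg : ∀ c : EuclideanSpace ℝ (Fin n),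
        ⨍ z in ball c r, f z ∂μ = (r ^ n * κ)⁻¹ * ∫ z in ball c r, f z ∂μ := by
      intro c
      rw [setAverage_eq, measureReal_def, hvol c r hr, smul_eq_mul]
    have hrn : 0 < r ^ n := pow_pos hr n
    have habs : |(⨍ z in ball x r, f z ∂μ) - ⨍ z in ball y r, f z ∂μ|
        ≤ (r ^ n * κ)⁻¹ * (2 * (M * (((r + d) ^ n - r ^ n) * κ))) := by
      rw [havg x, havg y, ← mul_sub, hsplit, abs_mul, abs_of_nonneg
        (inv_nonneg.mpr (mul_nonneg hrn.le hκpos.le))]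
      refine mul_le_mul_of_nonneg_left ?_ (inv_nonneg.mpr (mul_nonneg hrn.le hκpos.le))
      calc |(∫ z in ball x r \ ball y r, f z ∂μ) - ∫ z in ball y r \ ball x r, f z ∂μ|
          ≤ |∫ z in ball x r \ ball y r, f z ∂μ| + |∫ z in ball y r \ ball x r, f z ∂μ| :=
            abs_sub _ _
        _ ≤ M * (((r + d) ^ n - r ^ n) * κ) + M * (((r + d) ^ n - r ^ n) * κ) :=
            add_le_add (hIdiff x y rfl) (hIdiff y x (dist_comm y x))
        _ = 2 * (M * (((r + d) ^ n - r ^ n) * κ)) := by ring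
    refine habs.trans (le_of_eq ?_)
    have h0 : 1 + d / r = (r + d) / r := by field_simp
    rw [h0, div_pow]
    field_simp
  have hb : Tendsto (fun r : ℝ => 2 * M * ((1 + d / r) ^ n - 1)) atTop (nhds 0) := by
    have h1 : Tendsto (fun r : ℝ => 1 + d / r) atTop (nhds 1) := by
      have h0 : Tendsto (fun r : ℝ => d / r) atTop (nhds 0) :=
        Tendsto.div_atTop tendsto_const_nhds tendsto_id
      simpa using (tendsto_const_nhds (x := (1:ℝ))).add h0
    have h2 : Tendsto (fun r : ℝ => (1 + d / r) ^ n - 1) atTop (nhds 0) := by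
      simpa using (h1.pow n).sub (tendsto_const_nhds (x := (1:ℝ)))
    simpa using h2.const_mul (2 * M)
  refine squeeze_zero_norm' ?_ hb
  filter_upwards [eventually_gt_atTop 0] with r hr
  simpa [Real.norm_eq_abs] using key r hr

/-- If `f` is a bounded measurable function on `ℝⁿ` whose ball averages over `B(x,r)`
converge as `r → ∞` to `g x` for almost every `x`, then `g` is a.e. constant. -/
theorem ae_const_of_ball_average_tendsto
    {n : ℕ} (f g : EuclideanSpace ℝ (Fin n) → ℝ)
    (hf : Measurable f) (hbd : ∃ M : ℝ, ∀ x, |f x| ≤ M)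
    (hconv : ∀ᵐ x ∂(volume : Measure (EuclideanSpace ℝ (Fin n))),
      Tendsto (fun r : ℝ => ⨍ y in ball x r, f y) atTop (nhds (g x))) :
    ∃ c : ℝ, g =ᵐ[(volume : Measure (EuclideanSpace ℝ (Fin n)))] fun _ => c := by
  obtain ⟨M, hM⟩ := hbd
  have hne : (volume : Measure (EuclideanSpace ℝ (Fin n))) ≠ 0 := by
    intro h
    have := isOpen_ball.measure_pos (volume : Measure (EuclideanSpace ℝ (Fin n)))
      ⟨(0 : EuclideanSpace ℝ (Fin n)), mem_ball_self one_pos⟩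
    rw [h] at this
    simp at this
  have : (ae (volume : Measure (EuclideanSpace ℝ (Fin n)))).NeBot := ae_neBot.mpr hne
  obtain ⟨x₀, hx₀⟩ := hconv.exists
  refine ⟨g x₀, ?_⟩
  filter_upwards [hconv] with x hx
  have h0 := avg_diff_tendsto f hf hM x x₀
  have h1 : Tendsto (fun r : ℝ => ⨍ z in ball x₀ r, f z) atTop (nhds (g x)) := by
    simpa using hx.sub h0
  exact tendsto_nhds_unique h1 hx₀
end

section
/- Let a > 0 and C₁, C₂ > 0 with C₁ e^{a(d − 2δ')} > C₂ for fixed d > 0, δ' > 0. Suppose V : (0,∞) → ℝ satisfies C₁ e^{ar} ≤ |V(r)| ≤ C₂ e^{ar} for all large r. Then there is a constant C > 0 such that for all sufficiently large r, and all s ∈ [r−δ', r+δ'], t ∈ [r+d−δ', r+d+δ'], one has |V(t)| − |V(s)| > 0 and (|V(s)| + |V(t)|) / (|V(r+d)| − |V(r)|) ≤ C. -/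
open Set Real

/-- If `|V|` grows like `e^{ar}` and `C₁ e^{a(d−2δ')} > C₂`, then there is `C > 0` such
that for all large `r`, for all `s ∈ [r−δ', r+δ']` and `t ∈ [r+d−δ', r+d+δ']`, one has
`|V t| − |V s| > 0` and `(|V s| + |V t|)/(|V (r+d)| − |V r|) ≤ C`. -/
theorem annular_volume_ratio_bounded
    (a C₁ C₂ d δ' : ℝ) (ha : 0 < a) (hC₁ : 0 < C₁) (hC₂ : 0 < C₂)
    (hd : 0 < d) (hδ' : 0 < δ') (hgap : C₂ < C₁ * exp (a * (d - 2 * δ')))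
    (V : ℝ → ℝ)
    (hV : ∃ R : ℝ, ∀ r ≥ R, C₁ * exp (a * r) ≤ |V r| ∧ |V r| ≤ C₂ * exp (a * r)) :
    ∃ C > (0:ℝ), ∃ R' : ℝ, ∀ r ≥ R', ∀ s ∈ Icc (r - δ') (r + δ'),
      ∀ t ∈ Icc (r + d - δ') (r + d + δ'),
        0 < |V t| - |V s| ∧ (|V s| + |V t|) / (|V (r + d)| - |V r|) ≤ C := by
  obtain ⟨R, hR⟩ := hV
  set D : ℝ := C₁ * exp (a * d) - C₂ with hD
  have hDpos : 0 < D := by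
    have h1 : exp (a * (d - 2 * δ')) ≤ exp (a * d) := by
      apply exp_le_exp.2; nlinarith
    nlinarith [exp_pos (a * d)]
  set N : ℝ := C₂ * (exp (a * δ') + exp (a * (d + δ'))) with hN
  have hNpos : 0 < N := by positivity
  refine ⟨N / D, by positivity, R + δ', ?_⟩
  intro r hr s hs t ht
  have hsR : R ≤ s := by
    have := hs.1; linarith
  have htR : R ≤ t := by
    have := ht.1; linarith
  have hrR : R ≤ r := by linarith
  have hrdR : R ≤ r + d := by linarith
  obtain ⟨hs1, hs2⟩ := hR s hsR
  obtain ⟨ht1, ht2⟩ := hR t htR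
  obtain ⟨hr1, hr2⟩ := hR r hrR
  obtain ⟨hrd1, hrd2⟩ := hR (r + d) hrdR
  -- upper bound on |V s| via s ≤ r + δ'
  have hsU : |V s| ≤ C₂ * exp (a * (r + δ')) := by
    refine hs2.trans ?_
    have := exp_le_exp.2 (mul_le_mul_of_nonneg_left hs.2 ha.le)
    nlinarith
  have htU : |V t| ≤ C₂ * exp (a * (r + d + δ')) := by
    refine ht2.trans ?_
    have := exp_le_exp.2 (mul_le_mul_of_nonneg_left ht.2 ha.le)
    nlinarith
  have htL : C₁ * exp (a * (r + d - δ')) ≤ |V t| := by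
    refine le_trans ?_ ht1
    have := exp_le_exp.2 (mul_le_mul_of_nonneg_left ht.1 ha.le)
    nlinarith
  constructor
  · -- positivity of |V t| - |V s|
    have key : C₂ * exp (a * (r + δ')) < C₁ * exp (a * (r + d - δ')) := by
      have hsplit : exp (a * (r + d - δ')) = exp (a * (d - 2 * δ')) * exp (a * (r + δ')) := by
        rw [← exp_add]; ring_nf
      rw [hsplit]
      have := exp_pos (a * (r + δ'))
      nlinarith
    linarith
  · -- ratio bound
    have hdenL : exp (a * r) * D ≤ |V (r + d)| - |V r| := by
      have hsplit : exp (a * (r + d)) = exp (a * r) * exp (a * d) := by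
        rw [← exp_add]; ring_nf
      have h3 := hrd1
      rw [hsplit] at h3
      have hexp : exp (a * r) * D
          = C₁ * (exp (a * r) * exp (a * d)) - C₂ * exp (a * r) := by
        rw [hD]; ring
      linarith
    have hdenpos : 0 < exp (a * r) * D := by positivity
    have hnumU : |V s| + |V t| ≤ exp (a * r) * N := by
      have h1 : exp (a * (r + δ')) = exp (a * r) * exp (a * δ') := by
        rw [← exp_add]; ring_nf
      have h2 : exp (a * (r + d + δ')) = exp (a * r) * exp (a * (d + δ')) := by
        rw [← exp_add]; ring_nf
      rw [h1] at hsU; rw [h2] at htU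
      have hexp : exp (a * r) * N
          = C₂ * (exp (a * r) * exp (a * δ')) + C₂ * (exp (a * r) * exp (a * (d + δ'))) := by
        rw [hN]; ring
      linarith
    calc (|V s| + |V t|) / (|V (r + d)| - |V r|)
        ≤ (exp (a * r) * N) / (exp (a * r) * D) := by
          apply div_le_div₀ (by positivity) hnumU hdenpos hdenL
      _ = N / D := mul_div_mul_left _ _ (exp_pos (a * r)).ne'
end

section
/- Let λ, μ ∈ ℝ be nonzero with λ ≠ μ and λ/μ irrational. Let θ_λ, θ_μ ∈ ℝ, and let Ẽ_λ, Ẽ_μ : (0,∞) → ℝ tend to 0 at infinity. Then for every L ∈ [−1, 1] there exists a sequence t_k → ∞ such that cos(λ t_k + θ_λ) + Ẽ_λ(t_k) → 1 and cos(μ t_k + θ_μ) + Ẽ_μ(t_k) → L; consequently the ratio (cos(μt+θ_μ)+Ẽ_μ(t))/(cos(λt+θ_λ)+Ẽ_λ(t)) has every value in [−1,1] as a subsequential limit along t → ∞. -/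
open Set Real Filter

lemma dense_sub (ξ : ℝ) (hξ : Irrational ξ) :
    Dense ((AddSubgroup.closure {2*π, 2*π*ξ} : AddSubgroup ℝ) : Set ℝ) := by
  rcases AddSubgroup.dense_or_cyclic (AddSubgroup.closure {2*π, 2*π*ξ}) with h | ⟨a, ha⟩
  · exact h
  · exfalso
    have h1 : (2*π) ∈ AddSubgroup.closure ({2*π, 2*π*ξ} : Set ℝ) :=
      AddSubgroup.subset_closure (by simp)
    have h2 : (2*π*ξ) ∈ AddSubgroup.closure ({2*π, 2*π*ξ} : Set ℝ) :=
      AddSubgroup.subset_closure (by simp)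
    rw [ha, AddSubgroup.mem_closure_singleton] at h1 h2
    obtain ⟨m, hm⟩ := h1
    obtain ⟨n, hn⟩ := h2
    have hπ : (2*π) ≠ 0 := by positivity
    have hm0 : (m : ℝ) ≠ 0 := by
      rintro h
      rw [zsmul_eq_mul, h, zero_mul] at hm; exact hπ hm.symm
    have ha0 : a ≠ 0 := by
      rintro rfl; rw [smul_zero] at hm; exact hπ hm.symm
    refine hξ ⟨(n : ℚ)/(m : ℚ), ?_⟩
    have : ξ = (n * a) / (m * a) := by
      rw [zsmul_eq_mul] at hm hn
      rw [hm, hn, mul_div_cancel_left₀ _ hπ]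
    rw [this]
    rw [mul_div_mul_right _ _ ha0]
    push_cast
    ring

lemma dense_nsmul (ξ : ℝ) (hξ : Irrational ξ) :
    DenseRange (fun n : ℕ => n • (((2*π*ξ : ℝ) : Real.Angle))) := by
  haveI : Fact (0 < 2*π) := ⟨by positivity⟩
  haveI : CompactSpace Real.Angle := (inferInstance : CompactSpace (AddCircle (2*π)))
  rw [← denseRange_zsmul_iff_nsmul]
  have hd := dense_sub ξ hξ
  have hsub : (((AddSubgroup.closure {2*π, 2*π*ξ} : AddSubgroup ℝ) : Set ℝ)).image
      (fun x : ℝ => (x : Real.Angle)) ⊆ Set.range (fun n : ℤ => n • (((2*π*ξ : ℝ) : Real.Angle))) := by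
    rintro _ ⟨x, hx, rfl⟩
    rw [SetLike.mem_coe, AddSubgroup.mem_closure_pair] at hx
    obtain ⟨m, n, rfl⟩ := hx
    refine ⟨n, ?_⟩
    push_cast [Real.Angle.coe_add]
    simp [Real.Angle.coe_zsmul, Real.Angle.coe_two_pi]
  intro z
  have : Dense ((((AddSubgroup.closure {2*π, 2*π*ξ} : AddSubgroup ℝ) : Set ℝ)).image
      (fun x : ℝ => (x : Real.Angle))) := by
    rw [dense_iff_inter_open]
    rintro U hU ⟨w, hw⟩
    induction w using Real.Angle.induction_on with
    | _ x =>
      have hop : IsOpen ((fun y : ℝ => (y : Real.Angle)) ⁻¹' U) :=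
        hU.preimage Real.Angle.continuous_coe
      have hx : x ∈ (fun y : ℝ => (y : Real.Angle)) ⁻¹' U := hw
      obtain ⟨v, hv1, hv2⟩ := (dense_iff_inter_open.mp hd) _ hop ⟨x, hx⟩
      exact ⟨(v : Real.Angle), hv1, v, hv2, rfl⟩
  exact closure_mono hsub (this z)

lemma exists_subseq (ξ : ℝ) (hξ : Irrational ξ) (z : Real.Angle) :
    ∃ ψ : ℕ → ℕ, StrictMono ψ ∧
      Tendsto (fun k => (ψ k) • (((2*π*ξ : ℝ) : Real.Angle))) atTop (nhds z) := by
  haveI : Fact (0 < 2*π) := ⟨by positivity⟩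
  haveI : CompactSpace Real.Angle := (inferInstance : CompactSpace (AddCircle (2*π)))
  set a : Real.Angle := ((2*π*ξ : ℝ) : Real.Angle)
  have hcl : MapClusterPt z atTop (fun n : ℕ => n • a) := by
    rw [mapClusterPt_atTop_nsmul_iff_mem_topologicalClosure_zmultiples]
    have hd := dense_nsmul ξ hξ
    rw [← denseRange_zsmul_iff_nsmul] at hd
    have hsub : Set.range (fun n : ℤ => n • a) ⊆ ((AddSubgroup.zmultiples a : AddSubgroup Real.Angle) : Set Real.Angle) := by
      rintro x ⟨n, rfl⟩
      exact AddSubgroup.zsmul_mem _ (AddSubgroup.mem_zmultiples a) n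
    rw [← SetLike.mem_coe, AddSubgroup.topologicalClosure_coe]
    exact closure_mono hsub (hd z)
  exact TopologicalSpace.FirstCountableTopology.tendsto_subseq hcl

/-- Kronecker-type oscillation: if `λ/μ` is irrational and the error terms tend to `0`,
then for every `L ∈ [−1,1]` there is a sequence `t_k → ∞` along which
`cos(λt_k + θ_λ) + Ẽ_λ(t_k) → 1`, `cos(μt_k + θ_μ) + Ẽ_μ(t_k) → L`, and the ratio
of the two expressions tends to `L`. -/
theorem oscillation_irrational_case
    (lam mu : ℝ) (hlam : lam ≠ 0) (hmu : mu ≠ 0) (hne : lam ≠ mu)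
    (hirr : Irrational (lam / mu))
    (θlam θmu : ℝ) (Elam Emu : ℝ → ℝ)
    (hElam : Tendsto Elam atTop (nhds 0)) (hEmu : Tendsto Emu atTop (nhds 0)) :
    ∀ L ∈ Icc (-1 : ℝ) 1, ∃ t : ℕ → ℝ, Tendsto t atTop atTop ∧
      Tendsto (fun k => cos (lam * t k + θlam) + Elam (t k)) atTop (nhds 1) ∧
      Tendsto (fun k => cos (mu * t k + θmu) + Emu (t k)) atTop (nhds L) ∧
      Tendsto (fun k => (cos (mu * t k + θmu) + Emu (t k)) /
        (cos (lam * t k + θlam) + Elam (t k))) atTop (nhds L) := by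
  intro L hL
  set εz : ℤ := if 0 < lam then 1 else -1 with hεz
  set ε : ℝ := (εz : ℝ) with hε
  have habs : ε / lam = 1 / |lam| := by
    rcases lt_or_ge 0 lam with h | h
    · rw [hε, hεz, if_pos h, abs_of_pos h]; norm_num
    · have h' : lam < 0 := lt_of_le_of_ne h hlam
      rw [hε, hεz, if_neg (not_lt.mpr h), abs_of_neg h']
      push_cast
      rw [div_neg, neg_div]
  have hinv : Irrational (mu / lam) := by
    have := hirr.inv
    rwa [inv_div] at this
  have hξirr : Irrational (ε * (mu / lam)) := by
    rcases lt_or_ge 0 lam with h | h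
    · rw [hε, hεz, if_pos h]; push_cast; rwa [one_mul]
    · rw [hε, hεz, if_neg (not_lt.mpr h)]; push_cast; rw [neg_one_mul]; exact hinv.neg
  set ξ : ℝ := ε * (mu / lam) with hξ
  set c : ℝ := θmu - θlam * (mu / lam) with hc
  set y : ℝ := Real.arccos L with hy
  obtain ⟨ψ, hψ, hψt⟩ := exists_subseq ξ hξirr (((y - c : ℝ) : Real.Angle))
  set t : ℕ → ℝ := fun k => (2*π*(ψ k)*ε - θlam)/lam with ht
  have habs' : (0:ℝ) < 2*π/|lam| := by
    apply div_pos (by positivity) (abs_pos.mpr hlam)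
  have htt : Tendsto t atTop atTop := by
    have heq : ∀ k, t k = (2*π/|lam|) * (ψ k : ℝ) - θlam/lam := by
      intro k
      have h1 : t k = 2*π*(ψ k)*(ε/lam) - θlam/lam := by rw [ht]; ring
      rw [h1, habs]; ring
    rw [funext heq]
    apply Tendsto.atTop_add _ tendsto_const_nhds
    apply Tendsto.const_mul_atTop habs'
    exact tendsto_natCast_atTop_atTop.comp hψ.tendsto_atTop
  have hcos1 : ∀ k, Real.cos (lam * t k + θlam) = 1 := by
    intro k
    have h1 : lam * t k + θlam = ((ψ k : ℤ) * εz : ℤ) * (2*π) := by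
      rw [ht]
      push_cast
      field_simp
      ring
    rw [h1, Real.cos_int_mul_two_pi]
  have hmucos : Tendsto (fun k => Real.cos (mu * t k + θmu)) atTop (nhds L) := by
    have hkey : ∀ k, ((mu * t k + θmu : ℝ) : Real.Angle)
        = (ψ k) • (((2*π*ξ : ℝ) : Real.Angle)) + ((c : ℝ) : Real.Angle) := by
      intro k
      have h2 : mu * t k + θmu = (ψ k : ℝ) * (2*π*ξ) + c := by
        rw [ht, hξ, hc]
        field_simp
        ring
      rw [h2, Real.Angle.coe_add, ← nsmul_eq_mul, Real.Angle.coe_nsmul]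
    have hconv : Tendsto (fun k => ((mu * t k + θmu : ℝ) : Real.Angle)) atTop
        (nhds ((y : ℝ) : Real.Angle)) := by
      rw [funext hkey]
      have := hψt.add_const (((c : ℝ) : Real.Angle))
      rwa [← Real.Angle.coe_add, sub_add_cancel] at this
    have hcont := (Real.Angle.continuous_cos.tendsto (((y : ℝ) : Real.Angle))).comp hconv
    have hLval : Real.Angle.cos ((y : ℝ) : Real.Angle) = L := by
      rw [Real.Angle.cos_coe, hy, Real.cos_arccos hL.1 hL.2]
    rw [hLval] at hcont
    have : (fun k => Real.Angle.cos ((mu * t k + θmu : ℝ) : Real.Angle))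
        = fun k => Real.cos (mu * t k + θmu) := by
      funext k; rw [Real.Angle.cos_coe]
    rwa [← this]
  have hA : Tendsto (fun k => cos (lam * t k + θlam) + Elam (t k)) atTop (nhds 1) := by
    have : (fun k => cos (lam * t k + θlam) + Elam (t k)) = fun k => 1 + Elam (t k) := by
      funext k; rw [hcos1 k]
    rw [this]
    simpa using tendsto_const_nhds.add (hElam.comp htt)
  have hB : Tendsto (fun k => cos (mu * t k + θmu) + Emu (t k)) atTop (nhds L) := by
    simpa using hmucos.add (hEmu.comp htt)
  refine ⟨t, htt, hA, hB, ?_⟩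
  have := hB.div hA one_ne_zero
  rw [div_one] at this
  exact this
end
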